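/- Let G be a finite simple graph, let γ be an edge colouring of G with a finite set of colours, and let S be a set of vertices of G such that every permutation of the vertices of G that fixes all vertices outside S is an automorphism of G. Then there exists an edge colouring γ' of G with the same colour set such that: (a) for each colour c, the number of edges of colour c is the same under γ and γ'; (b) for each vertex v ∉ S and each colour c, the number of edges of colour c incident with v is the same under γ and γ'; (c) every edge with both endpoints outside S has the same colour under γ and γ'; and (d) for each colour c, the colour class of c under γ' is almost regular on S. -/

import Mathlib

open SimpleGraph Finset

private lemma chain_dedup {α : Type*} [DecidableEq α] (r : α → α → Prop) :
    ∀ (l : List α) (a : α), List.Chain r a l →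
      ∃ l', List.Chain r a l' ∧ (a :: l').Nodup ∧
        (a :: l').getLast (List.cons_ne_nil _ _) = (a :: l).getLast (List.cons_ne_nil _ _) := by
  intro l
  induction l with
  | nil => exact fun a _ => ⟨[], List.Chain.nil, List.nodup_singleton a, rfl⟩
  | cons b t ih =>
    intro a hch
    rw [List.Chain, List.chain_cons] at hch
    obtain ⟨hrab, hcht⟩ := hch
    obtain ⟨t', hch', hnd', hlast'⟩ := ih b hcht
    have hlbt : (a :: b :: t).getLast (List.cons_ne_nil _ _)
        = (b :: t).getLast (List.cons_ne_nil _ _) := List.getLast_cons (List.cons_ne_nil _ _)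
    by_cases ha : a ∈ b :: t'
    · rcases List.append_of_mem ha with ⟨u, w, huw⟩
      have hsub : (a :: w).Sublist (b :: t') := huw ▸ List.sublist_append_right u (a :: w)
      have hndaw : (a :: w).Nodup := hnd'.sublist hsub
      rcases u with _ | ⟨c, u'⟩
      · injection huw with h1 h2
        subst h1
        subst h2
        exact ⟨t', hch', hndaw, by rw [hlbt, ← hlast']⟩
      · injection huw with h1 h2
        subst h1
        rw [List.append_eq] at h2
        subst h2
        have hchaw : List.Chain r a w := (List.isChain_cons_split.mp hch').2
        refine ⟨w, hchaw, hndaw, ?_⟩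
        rw [hlbt, ← hlast']
        exact (List.getLast_append_of_ne_nil (l := b :: u') (l' := a :: w) _ (List.cons_ne_nil _ _)).symm
    · refine ⟨b :: t', List.chain_cons.mpr ⟨hrab, hch'⟩, List.nodup_cons.mpr ⟨ha, hnd'⟩, ?_⟩
      rw [List.getLast_cons (List.cons_ne_nil _ _), hlast', hlbt]

private lemma chain_witness {α β : Type*} {r : α → α → Prop} {Z : Finset β} {f g : β → α}
    (hr : ∀ a b, r a b → ∃ z ∈ Z, f z = a ∧ g z = b) :
    ∀ (l : List α) (a : α), List.Chain r a l →
      ∃ zs : List β, (∀ z ∈ zs, z ∈ Z) ∧ zs.map f = (a :: l).dropLast ∧ zs.map g = l := by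
  intro l
  induction l with
  | nil => exact fun a _ => ⟨[], by simp, by simp, by simp⟩
  | cons b t ih =>
    intro a hch
    rw [List.Chain, List.chain_cons] at hch
    obtain ⟨z, hz, hfz, hgz⟩ := hr a b hch.1
    obtain ⟨zs', hzs', hf', hg'⟩ := ih b hch.2
    refine ⟨z :: zs', ?_, ?_, ?_⟩
    · intro w hw; rcases List.mem_cons.mp hw with h | h
      · exact h ▸ hz
      · exact hzs' w h
    · simp only [List.map_cons, hf', hfz, List.dropLast_cons₂]
    · simp [hg', hgz]

private lemma card_inv_aux {α C : Type*} [Fintype α] [DecidableEq α] [DecidableEq C]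
    (γm : α → C) (φ : α → α) (hφ : ∀ a, φ (φ a) = a) (c : C)
    (p : α → Prop) [DecidablePred p] (hp : ∀ a, p (φ a) ↔ p a) :
    (Finset.univ.filter fun a => γm (φ a) = c ∧ p a).card =
      (Finset.univ.filter fun a => γm a = c ∧ p a).card := by
  apply Finset.card_bij (fun a _ => φ a)
  · intro a ha
    simp only [mem_filter, mem_univ, true_and] at ha ⊢
    exact ⟨ha.1, (hp a).mpr ha.2⟩
  · intro a _ b _ h
    have := congrArg φ h; rwa [hφ, hφ] at this
  · intro b hb
    simp only [mem_filter, mem_univ, true_and] at hb ⊢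
    exact ⟨φ b, ⟨by rw [hφ]; exact hb.1, (hp (φ b)).mp (by rw [hφ]; exact hb.2)⟩, hφ b⟩

private lemma card_inv_aux' {α C : Type*} [Fintype α] [DecidableEq α] [DecidableEq C]
    (γm : α → C) (φ : α → α) (hφ : ∀ a, φ (φ a) = a) (c : C) :
    (Finset.univ.filter fun a => γm (φ a) = c).card =
      (Finset.univ.filter fun a => γm a = c).card := by
  apply Finset.card_bij (fun a _ => φ a)
  · intro a ha
    simp only [mem_filter, mem_univ, true_and] at ha ⊢
    exact ha
  · intro a _ b _ h
    have := congrArg φ h; rwa [hφ, hφ] at this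
  · intro b hb
    simp only [mem_filter, mem_univ, true_and] at hb ⊢
    exact ⟨φ b, by rw [hφ]; exact hb, hφ b⟩


private lemma card_edge_nbr {V : Type*} [Fintype V] [DecidableEq V] {G : SimpleGraph V}
    [DecidableRel G.Adj]
    (v : V) (W : Finset V) (hvW : v ∉ W) (hW : ∀ w ∈ W, G.Adj v w)
    (p : G.edgeSet → Prop) [DecidablePred p] (q : V → Prop) [DecidablePred q]
    (hq : ∀ (w) (hw : w ∈ W), (q w ↔ p ⟨s(v,w), (G.mem_edgeSet).mpr (hW w hw)⟩)) :
    (W.filter q).card =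
      (Finset.univ.filter fun e : G.edgeSet =>
        p e ∧ v ∈ (e : Sym2 V) ∧ ∃ z ∈ W, z ∈ (e : Sym2 V)).card := by
  apply Finset.card_bij (fun w hw => (⟨s(v,w), (G.mem_edgeSet).mpr
    (hW w (Finset.mem_filter.mp hw).1)⟩ : G.edgeSet))
  · intro w hw
    obtain ⟨hwW, hqw⟩ := Finset.mem_filter.mp hw
    simp only [mem_filter, mem_univ, true_and]
    refine ⟨(hq w hwW).mp hqw, Sym2.mem_mk_left _ _, w, hwW, Sym2.mem_mk_right _ _⟩
  · intro w₁ h₁ w₂ h₂ h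
    have : s(v, w₁) = s(v, w₂) := congrArg Subtype.val h
    exact Sym2.congr_right.mp this
  · intro e he
    simp only [mem_filter, mem_univ, true_and] at he
    obtain ⟨hpe, hve, z, hzW, hze⟩ := he
    have hvz : v ≠ z := fun h => hvW (h ▸ hzW)
    have hez : (e : Sym2 V) = s(v, z) := (Sym2.mem_and_mem_iff hvz).mp ⟨hve, hze⟩
    have hqz : q z := (hq z hzW).mpr (by
      have : (⟨s(v,z), (G.mem_edgeSet).mpr (hW z hzW)⟩ : G.edgeSet) = e :=
        Subtype.ext hez.symm
      rw [this]; exact hpe)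
    exact ⟨z, Finset.mem_filter.mpr ⟨hzW, hqz⟩, Subtype.ext hez.symm⟩

private def Fc {V : Type*} [DecidableEq V] {G : SimpleGraph V} [DecidableRel G.Adj]
    {C : Type*} (γ' : G.edgeSet → C) (cdef : C) (a b : V) : C :=
  if h : G.Adj a b then γ' ⟨s(a,b), (G.mem_edgeSet).mpr h⟩ else cdef

private lemma Fc_pos {V : Type*} [DecidableEq V] {G : SimpleGraph V} [DecidableRel G.Adj]
    {C : Type*} (γ' : G.edgeSet → C) (cdef : C) {a b : V} (h : G.Adj a b) :
    Fc γ' cdef a b = γ' ⟨s(a,b), (G.mem_edgeSet).mpr h⟩ := dif_pos h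

private lemma Fc_symm {V : Type*} [DecidableEq V] {G : SimpleGraph V} [DecidableRel G.Adj]
    {C : Type*} (γ' : G.edgeSet → C) (cdef : C) (a b : V) :
    Fc γ' cdef a b = Fc γ' cdef b a := by
  by_cases h : G.Adj a b
  · rw [Fc_pos γ' cdef h, Fc_pos γ' cdef h.symm]
    congr 1
    exact Subtype.ext Sym2.eq_swap
  · rw [Fc, Fc, dif_neg h, dif_neg (fun h' => h h'.symm)]


set_option maxHeartbeats 3000000 in
theorem almost_regular_edge_colouring
    {V : Type*} [Fintype V] [DecidableEq V] (G : SimpleGraph V) [DecidableRel G.Adj]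
    {C : Type*} [Fintype C] [DecidableEq C]
    (γ : G.edgeSet → C) (S : Set V) [DecidablePred (· ∈ S)]
    (hS : ∀ σ : Equiv.Perm V, (∀ v ∉ S, σ v = v) →
      ∀ u v, G.Adj u v ↔ G.Adj (σ u) (σ v)) :
    ∃ γ' : G.edgeSet → C,
      -- (a) each colour class has the same number of edges under γ and γ'
      (∀ c : C, (Finset.univ.filter fun e : G.edgeSet => γ' e = c).card =
          (Finset.univ.filter fun e : G.edgeSet => γ e = c).card) ∧
      -- (b) for v ∉ S, the number of edges of each colour incident with v is unchanged
      (∀ v ∉ S, ∀ c : C,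
        (Finset.univ.filter fun e : G.edgeSet => γ' e = c ∧ v ∈ (e : Sym2 V)).card =
          (Finset.univ.filter fun e : G.edgeSet => γ e = c ∧ v ∈ (e : Sym2 V)).card) ∧
      -- (c) edges with both endpoints outside S keep their colour
      (∀ e : G.edgeSet, (∀ v ∈ (e : Sym2 V), v ∉ S) → γ' e = γ e) ∧
      -- (d) each colour class of γ' is almost regular on S
      (∀ c : C, ∀ x ∈ S, ∀ y ∈ S,
        |(((Finset.univ.filter fun e : G.edgeSet => γ' e = c ∧ x ∈ (e : Sym2 V)).card : ℤ)) -
          ((Finset.univ.filter fun e : G.edgeSet => γ' e = c ∧ y ∈ (e : Sym2 V)).card : ℤ)| ≤ 1) := by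
  rcases isEmpty_or_nonempty G.edgeSet with hE | hE
  · refine ⟨γ, fun c => rfl, fun v hv c => rfl, fun e _ => rfl, fun c x hx y hy => ?_⟩
    rw [Finset.univ_eq_empty, Finset.filter_empty, Finset.card_empty]
    simp
  obtain ⟨e₀⟩ := hE
  -- the default colour
  set cdef : C := γ e₀ with hcdef
  -- incidence counts via neighbours
  have hDnb : ∀ (γ' : G.edgeSet → C) (v : V) (c : C),
      (Finset.univ.filter fun e : G.edgeSet => γ' e = c ∧ v ∈ (e : Sym2 V)).card
        = ((G.neighborFinset v).filter fun w => Fc γ' cdef v w = c).card := by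
    intro γ' v c
    have step1 : (Finset.univ.filter fun e : G.edgeSet => γ' e = c ∧ v ∈ (e : Sym2 V))
        = (Finset.univ.filter fun e : G.edgeSet =>
            γ' e = c ∧ v ∈ (e : Sym2 V) ∧ ∃ z ∈ G.neighborFinset v, z ∈ (e : Sym2 V)) := by
      apply Finset.filter_congr
      intro e _
      constructor
      · rintro ⟨h1, h2⟩
        refine ⟨h1, h2, ?_⟩
        obtain ⟨ed, hed⟩ := e
        revert h2
        induction ed using Sym2.ind with
        | _ a b =>
          intro h2
          rcases Sym2.mem_iff.mp h2 with rfl | rfl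
          · exact ⟨b, (G.mem_neighborFinset _ _).mpr (G.mem_edgeSet.mp hed),
              Sym2.mem_mk_right _ _⟩
          · exact ⟨a, (G.mem_neighborFinset _ _).mpr (G.mem_edgeSet.mp hed).symm,
              Sym2.mem_mk_left _ _⟩
      · rintro ⟨h1, h2, _⟩; exact ⟨h1, h2⟩
    rw [step1, ← card_edge_nbr v (G.neighborFinset v) (G.notMem_neighborFinset_self v)
      (fun w hw => (G.mem_neighborFinset v w).mp hw) (fun e => γ' e = c)
      (fun w => Fc γ' cdef v w = c)
      (fun w hw => by
        show Fc γ' cdef v w = c ↔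
          γ' ⟨s(v,w), (G.mem_edgeSet).mpr ((G.mem_neighborFinset v w).mp hw)⟩ = c
        rw [Fc_pos γ' cdef ((G.mem_neighborFinset v w).mp hw)])]
  -- set of admissible colourings, and a minimiser of the potential
  obtain ⟨γm, hγmPF, hmin⟩ := Finset.exists_min_image
    (Finset.univ.filter fun γ' : G.edgeSet → C =>
      (∀ c : C, (Finset.univ.filter fun e : G.edgeSet => γ' e = c).card =
          (Finset.univ.filter fun e : G.edgeSet => γ e = c).card) ∧
      (∀ v ∉ S, ∀ c : C,
        (Finset.univ.filter fun e : G.edgeSet => γ' e = c ∧ v ∈ (e : Sym2 V)).card =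
          (Finset.univ.filter fun e : G.edgeSet => γ e = c ∧ v ∈ (e : Sym2 V)).card) ∧
      (∀ e : G.edgeSet, (∀ v ∈ (e : Sym2 V), v ∉ S) → γ' e = γ e))
    (fun γ' => ∑ v ∈ S.toFinset, ∑ c : C,
      ((Finset.univ.filter fun e : G.edgeSet => γ' e = c ∧ v ∈ (e : Sym2 V)).card : ℤ)^2)
    ⟨γ, Finset.mem_filter.mpr ⟨Finset.mem_univ _, fun c => rfl, fun v hv c => rfl,
      fun e he => rfl⟩⟩
  obtain ⟨-, hA, hB, hC⟩ := Finset.mem_filter.mp hγmPF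
  refine ⟨γm, hA, hB, hC, ?_⟩
  by_contra hd
  push_neg at hd
  obtain ⟨c₁, x₁, hx₁, y₁, hy₁, hgt⟩ := hd
  obtain ⟨x, hxS, y, hyS, c₀, h2⟩ :
      ∃ x, x ∈ S ∧ ∃ y, y ∈ S ∧ ∃ c₀ : C,
        (Finset.univ.filter fun e : G.edgeSet => γm e = c₀ ∧ y ∈ (e : Sym2 V)).card + 2 ≤
        (Finset.univ.filter fun e : G.edgeSet => γm e = c₀ ∧ x ∈ (e : Sym2 V)).card := by
    rcases lt_abs.mp hgt with h | h
    · exact ⟨x₁, hx₁, y₁, hy₁, c₁, by omega⟩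
    · exact ⟨y₁, hy₁, x₁, hx₁, c₁, by omega⟩
  have hxny : x ≠ y := by rintro rfl; omega
  set τ : Equiv.Perm V := Equiv.swap x y with hτdef
  have hτfix : ∀ v, v ≠ x → v ≠ y → τ v = v := fun v h1 h2 =>
    Equiv.swap_apply_of_ne_of_ne h1 h2
  have hτadj : ∀ u v, G.Adj u v ↔ G.Adj (τ u) (τ v) :=
    hS τ (fun v hv => hτfix v (fun h => hv (h ▸ hxS)) (fun h => hv (h ▸ hyS)))
  have hadj_iff : ∀ z, z ≠ x → z ≠ y → (G.Adj x z ↔ G.Adj y z) := by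
    intro z h1 h2
    have h3 := hτadj x z
    rwa [show τ x = y from Equiv.swap_apply_left x y, hτfix z h1 h2] at h3
  set Z : Finset V := (G.neighborFinset x).erase y with hZdef
  have hZmem : ∀ z ∈ Z, z ≠ x ∧ z ≠ y ∧ G.Adj x z ∧ G.Adj y z := by
    intro z hz
    obtain ⟨hzy, hzx'⟩ := Finset.mem_erase.mp hz
    have hxz : G.Adj x z := (G.mem_neighborFinset x z).mp hzx'
    have hzx : z ≠ x := fun h => G.loopless.irrefl x (h ▸ hxz)
    exact ⟨hzx, hzy, hxz, (hadj_iff z hzx hzy).mp hxz⟩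
  have hZeq : (G.neighborFinset y).erase x = Z := by
    ext z
    simp only [hZdef, Finset.mem_erase, SimpleGraph.mem_neighborFinset]
    constructor
    · rintro ⟨hzx, hyz⟩
      have hzy : z ≠ y := fun h => G.loopless.irrefl y (h ▸ hyz)
      exact ⟨hzy, (hadj_iff z hzx hzy).mpr hyz⟩
    · rintro ⟨hzy, hxz⟩
      have hzx : z ≠ x := fun h => G.loopless.irrefl x (h ▸ hxz)
      exact ⟨hzx, (hadj_iff z hzx hzy).mp hxz⟩
  -- splitting a neighbour count at one vertex
  have hsplit : ∀ (v u : V) (q : V → Prop) (_ : DecidablePred q),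
      ((G.neighborFinset v).filter q).card =
        (((G.neighborFinset v).erase u).filter q).card +
        (if u ∈ (G.neighborFinset v).filter q then 1 else 0) := by
    intro v u q _
    rw [Finset.filter_erase]
    by_cases h : u ∈ (G.neighborFinset v).filter q
    · rw [if_pos h, Finset.card_erase_of_mem h]
      have h1 : 1 ≤ ((G.neighborFinset v).filter q).card :=
        Finset.card_pos.mpr ⟨u, h⟩
      omega
    · rw [if_neg h, Finset.erase_eq_of_notMem h, add_zero]
  have hDout : ∀ e : C,
      (Finset.univ.filter fun ed : G.edgeSet => γm ed = e ∧ x ∈ (ed : Sym2 V)).card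
      = (Z.filter fun z => Fc γm cdef x z = e).card +
        (if G.Adj x y ∧ Fc γm cdef x y = e then 1 else 0) := by
    intro e
    rw [hDnb γm x e, hsplit x y _ inferInstance, hZdef]
    congr 1
    apply if_congr _ rfl rfl
    simp only [Finset.mem_filter, SimpleGraph.mem_neighborFinset]
  have hDin : ∀ e : C,
      (Finset.univ.filter fun ed : G.edgeSet => γm ed = e ∧ y ∈ (ed : Sym2 V)).card
      = (Z.filter fun z => Fc γm cdef y z = e).card +
        (if G.Adj x y ∧ Fc γm cdef x y = e then 1 else 0) := by
    intro e
    rw [hDnb γm y e, hsplit y x _ inferInstance, hZeq]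
    congr 1
    apply if_congr _ rfl rfl
    simp only [Finset.mem_filter, SimpleGraph.mem_neighborFinset]
    rw [Fc_symm γm cdef y x]
    exact and_congr (G.adj_comm y x) Iff.rfl
  -- the colour digraph and reachability
  set r : C → C → Prop := fun a b => ∃ z ∈ Z, Fc γm cdef x z = a ∧ Fc γm cdef y z = b
    with hrdef
  haveI : DecidablePred (Relation.ReflTransGen r c₀) := Classical.decPred _
  set R : Finset C := Finset.univ.filter (Relation.ReflTransGen r c₀) with hRdef
  have hc₀R : c₀ ∈ R := Finset.mem_filter.mpr ⟨Finset.mem_univ _, Relation.ReflTransGen.refl⟩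
  have hfiber : ∀ (F : V → C), (Z.filter fun z => F z ∈ R).card
      = ∑ e ∈ R, (Z.filter fun z => F z = e).card := by
    intro F
    rw [Finset.card_eq_sum_card_fiberwise (f := F) (s := Z.filter fun z => F z ∈ R) (t := R)
      (fun z hz => (Finset.mem_filter.mp hz).2)]
    apply Finset.sum_congr rfl
    intro e heR
    rw [Finset.filter_filter]
    congr 1
    apply Finset.filter_congr
    intro z _
    constructor
    · rintro ⟨_, h2⟩; exact h2
    · intro h; exact ⟨by rw [h]; exact heR, h⟩
  have hsubR : Z.filter (fun z => Fc γm cdef x z ∈ R)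
      ⊆ Z.filter (fun z => Fc γm cdef y z ∈ R) := by
    intro z hz
    obtain ⟨hzZ, hfx⟩ := Finset.mem_filter.mp hz
    refine Finset.mem_filter.mpr ⟨hzZ, ?_⟩
    have hstep : r (Fc γm cdef x z) (Fc γm cdef y z) := ⟨z, hzZ, rfl, rfl⟩
    exact Finset.mem_filter.mpr ⟨Finset.mem_univ _,
      ((Finset.mem_filter.mp hfx).2).tail hstep⟩
  have hRsum : ∑ e ∈ R, (Z.filter fun z => Fc γm cdef x z = e).card
      ≤ ∑ e ∈ R, (Z.filter fun z => Fc γm cdef y z = e).card := by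
    rw [← hfiber _, ← hfiber _]
    exact Finset.card_le_card hsubR
  have h2out : (Z.filter fun z => Fc γm cdef y z = c₀).card + 2
      ≤ (Z.filter fun z => Fc γm cdef x z = c₀).card := by
    have e1 := hDout c₀
    have e2 := hDin c₀
    omega
  obtain ⟨d, hdR, hdne, hdio⟩ : ∃ d ∈ R, d ≠ c₀ ∧
      (Z.filter fun z => Fc γm cdef x z = d).card
        < (Z.filter fun z => Fc γm cdef y z = d).card := by
    by_contra hno
    push_neg at hno
    have hle : ∑ e ∈ R.erase c₀, (Z.filter fun z => Fc γm cdef y z = e).card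
        ≤ ∑ e ∈ R.erase c₀, (Z.filter fun z => Fc γm cdef x z = e).card :=
      Finset.sum_le_sum fun e he =>
        hno e (Finset.mem_of_mem_erase he) (Finset.ne_of_mem_erase he)
    have e1 := Finset.add_sum_erase R (fun e => (Z.filter fun z => Fc γm cdef y z = e).card) hc₀R
    have e2 := Finset.add_sum_erase R (fun e => (Z.filter fun z => Fc γm cdef x z = e).card) hc₀R
    omega
  have hpq : (Finset.univ.filter fun ed : G.edgeSet => γm ed = d ∧ x ∈ (ed : Sym2 V)).card
      < (Finset.univ.filter fun ed : G.edgeSet => γm ed = d ∧ y ∈ (ed : Sym2 V)).card := by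
    have e1 := hDout d
    have e2 := hDin d
    omega
  -- extract a duplicate-free alternating chain
  have hrtg : Relation.ReflTransGen r c₀ d := (Finset.mem_filter.mp hdR).2
  obtain ⟨l₀, hch₀, hlast₀⟩ := List.exists_isChain_cons_of_relationReflTransGen hrtg
  obtain ⟨l, hch, hnd, hlast'⟩ := chain_dedup r l₀ c₀ hch₀
  have hlast : (c₀ :: l).getLast (List.cons_ne_nil _ _) = d := by rw [hlast', hlast₀]
  have hlne : l ≠ [] := by
    intro h
    subst h
    exact hdne hlast.symm
  obtain ⟨zs, hzsZ, hzsf, hzsg⟩ := chain_witness (Z := Z)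
    (f := fun z => Fc γm cdef x z) (g := fun z => Fc γm cdef y z)
    (fun a b h => h) l c₀ hch
  have hdlnd : ((c₀ :: l).dropLast).Nodup := hnd.sublist (List.dropLast_sublist _)
  have hlnd : l.Nodup := (List.nodup_cons.mp hnd).2
  have hndzs : zs.Nodup := by
    have h1 := hdlnd
    rw [← hzsf] at h1
    exact h1.of_map _
  have hTZ : ∀ z ∈ zs.toFinset, z ∈ Z := fun z hz => hzsZ z (List.mem_toFinset.mp hz)
  have hxT : x ∉ zs.toFinset := fun h => (hZmem x (hTZ x h)).1 rfl
  have hyT : y ∉ zs.toFinset := fun h => (hZmem y (hTZ y h)).2.1 rfl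
  -- counting in the chain
  have hcnt : ∀ (F : V → C) (L' : List C), zs.map F = L' → L'.Nodup →
      ∀ e, ((zs.toFinset.filter fun z => F z = e).card = if e ∈ L' then 1 else 0) := by
    intro F L' hmap hndL e
    subst hmap
    have hinj := List.inj_on_of_nodup_map hndL
    by_cases he : e ∈ zs.map F
    · rw [if_pos he]
      obtain ⟨z, hz, hfz⟩ := List.mem_map.mp he
      rw [Finset.card_eq_one]
      refine ⟨z, ?_⟩
      ext w
      simp only [Finset.mem_filter, List.mem_toFinset, Finset.mem_singleton]
      constructor
      · rintro ⟨hw, hfw⟩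
        exact hinj hw hz (hfw.trans hfz.symm)
      · rintro rfl; exact ⟨hz, hfz⟩
    · rw [if_neg he, Finset.card_eq_zero, Finset.filter_eq_empty_iff]
      intro w hw
      exact fun hfw => he (List.mem_map.mpr ⟨w, List.mem_toFinset.mp hw, hfw⟩)
  have hcf : ∀ e, ((zs.toFinset.filter fun z => Fc γm cdef x z = e).card
      = if e ∈ (c₀ :: l).dropLast then 1 else 0) := hcnt _ _ hzsf hdlnd
  have hcg : ∀ e, ((zs.toFinset.filter fun z => Fc γm cdef y z = e).card
      = if e ∈ l then 1 else 0) := hcnt _ _ hzsg hlnd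
  -- membership facts in the chain
  have hLsplit : c₀ :: l = (c₀ :: l).dropLast ++ [d] := by
    conv_lhs => rw [← List.dropLast_append_getLast (l := c₀ :: l) (List.cons_ne_nil _ _)]
    rw [hlast]
  have hc₀f : c₀ ∈ (c₀ :: l).dropLast := by
    obtain ⟨b, t, rfl⟩ := List.exists_cons_of_ne_nil hlne
    rw [List.dropLast_cons₂]
    exact List.mem_cons_self
  have hc₀g : c₀ ∉ l := (List.nodup_cons.mp hnd).1
  have hdf : d ∉ (c₀ :: l).dropLast := by
    have h1 : ((c₀ :: l).dropLast ++ [d]).Nodup := by rw [← hLsplit]; exact hnd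
    rw [List.nodup_append] at h1
    exact fun hd' => h1.2.2 d hd' d (List.mem_singleton_self d) rfl
  have hdg : d ∈ l := by
    have h1 : d ∈ c₀ :: l := by
      rw [← hlast]
      exact List.getLast_mem _
    exact (List.mem_cons.mp h1).resolve_left hdne
  have hother : ∀ e, e ≠ c₀ → e ≠ d → (e ∈ (c₀ :: l).dropLast ↔ e ∈ l) := by
    intro e he1 he2
    constructor
    · intro h
      have h1 : e ∈ c₀ :: l := by rw [hLsplit]; exact List.mem_append_left _ h
      exact (List.mem_cons.mp h1).resolve_left he1
    · intro h
      have h1 : e ∈ (c₀ :: l).dropLast ++ [d] := by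
        rw [← hLsplit]; exact List.mem_cons_of_mem _ h
      rcases List.mem_append.mp h1 with h2 | h2
      · exact h2
      · exact absurd (List.mem_singleton.mp h2) he2
  -- the edge involution
  have hmapedge : ∀ (ed : Sym2 V), ed ∈ G.edgeSet → Sym2.map τ ed ∈ G.edgeSet := by
    intro ed
    induction ed using Sym2.ind with
    | _ a b =>
      intro h
      rw [Sym2.map_pair_eq, G.mem_edgeSet]
      rw [G.mem_edgeSet] at h
      exact (hτadj a b).mp h
  set φ : G.edgeSet → G.edgeSet := fun ed =>
    if (∃ z ∈ zs.toFinset, z ∈ (ed : Sym2 V)) then ⟨Sym2.map τ (ed : Sym2 V), hmapedge _ ed.2⟩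
    else ed with hφdef
  have hτT : ∀ z ∈ zs.toFinset, τ z = z := fun z hz =>
    hτfix z (hZmem z (hTZ z hz)).1 (hZmem z (hTZ z hz)).2.1
  have hmem_iff : ∀ (w : V), w ≠ x → w ≠ y → ∀ ed : Sym2 V,
      (w ∈ Sym2.map τ ed ↔ w ∈ ed) := by
    intro w h1 h2 ed
    rw [Sym2.mem_map]
    constructor
    · rintro ⟨a, ha, hτa⟩
      have : a = w := by
        have h3 : τ (τ a) = a := Equiv.swap_apply_self x y a
        rw [hτa, hτfix w h1 h2] at h3
        exact h3.symm
      rwa [← this]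
    · intro h
      exact ⟨w, h, hτfix w h1 h2⟩
  have hφval : ∀ ed : G.edgeSet, (∃ z ∈ zs.toFinset, z ∈ (ed : Sym2 V)) →
      ((φ ed : Sym2 V) = Sym2.map τ (ed : Sym2 V)) := by
    intro ed h
    rw [hφdef]
    simp only [if_pos h]
  have hφval' : ∀ ed : G.edgeSet, ¬(∃ z ∈ zs.toFinset, z ∈ (ed : Sym2 V)) → φ ed = ed := by
    intro ed h
    rw [hφdef]
    simp only [if_neg h]
  have htch_iff : ∀ ed : G.edgeSet,
      ((∃ z ∈ zs.toFinset, z ∈ ((φ ed : G.edgeSet) : Sym2 V)) ↔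
        (∃ z ∈ zs.toFinset, z ∈ (ed : Sym2 V))) := by
    intro ed
    by_cases h : ∃ z ∈ zs.toFinset, z ∈ (ed : Sym2 V)
    · rw [hφval ed h]
      constructor
      · rintro ⟨z, hz, hze⟩
        exact ⟨z, hz, (hmem_iff z (hZmem z (hTZ z hz)).1 (hZmem z (hTZ z hz)).2.1 _).mp hze⟩
      · rintro ⟨z, hz, hze⟩
        exact ⟨z, hz, (hmem_iff z (hZmem z (hTZ z hz)).1 (hZmem z (hTZ z hz)).2.1 _).mpr hze⟩
    · rw [hφval' ed h]
  have hφφ : ∀ ed, φ (φ ed) = ed := by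
    intro ed
    by_cases h : ∃ z ∈ zs.toFinset, z ∈ (ed : Sym2 V)
    · have h2 : ∃ z ∈ zs.toFinset, z ∈ ((φ ed : G.edgeSet) : Sym2 V) := (htch_iff ed).mpr h
      apply Subtype.ext
      rw [hφval _ h2, hφval _ h, Sym2.map_map]
      have h3 : (⇑τ ∘ ⇑τ) = id := funext (Equiv.swap_apply_self x y)
      rw [h3, Sym2.map_id, id_eq]
    · have h2 : ¬ ∃ z ∈ zs.toFinset, z ∈ ((φ ed : G.edgeSet) : Sym2 V) := fun hh =>
        h ((htch_iff ed).mp hh)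
      rw [hφval' _ h2, hφval' _ h]
  have hφout : ∀ ed : G.edgeSet, x ∉ (ed : Sym2 V) → y ∉ (ed : Sym2 V) → φ ed = ed := by
    intro ed hx' hy'
    by_cases h : ∃ z ∈ zs.toFinset, z ∈ (ed : Sym2 V)
    · apply Subtype.ext
      rw [hφval _ h]
      obtain ⟨ed, hed⟩ := ed
      simp only at hx' hy' ⊢
      induction ed using Sym2.ind with
      | _ a b =>
        rw [Sym2.map_pair_eq]
        rw [hτfix a (fun hh => hx' (hh ▸ Sym2.mem_mk_left a b))
            (fun hh => hy' (hh ▸ Sym2.mem_mk_left a b)),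
          hτfix b (fun hh => hx' (hh ▸ Sym2.mem_mk_right a b))
            (fun hh => hy' (hh ▸ Sym2.mem_mk_right a b))]
    · exact hφval' _ h
  have hφmem : ∀ (w : V), w ≠ x → w ≠ y → ∀ ed : G.edgeSet,
      (w ∈ ((φ ed : G.edgeSet) : Sym2 V) ↔ w ∈ (ed : Sym2 V)) := by
    intro w h1 h2 ed
    by_cases h : ∃ z ∈ zs.toFinset, z ∈ (ed : Sym2 V)
    · rw [hφval _ h]; exact hmem_iff w h1 h2 _
    · rw [hφval' _ h]
  -- splitting incidence counts by whether the edge touches the chain vertices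
  have htchsplit : ∀ (γ' : G.edgeSet → C) (e : C) (v : V),
      (Finset.univ.filter fun ed : G.edgeSet => γ' ed = e ∧ v ∈ (ed : Sym2 V)).card =
      (Finset.univ.filter fun ed : G.edgeSet =>
        γ' ed = e ∧ v ∈ (ed : Sym2 V) ∧ (∃ z ∈ zs.toFinset, z ∈ (ed : Sym2 V))).card +
      (Finset.univ.filter fun ed : G.edgeSet =>
        (γ' ed = e ∧ v ∈ (ed : Sym2 V)) ∧ ¬(∃ z ∈ zs.toFinset, z ∈ (ed : Sym2 V))).card := by
    intro γ' e v
    rw [← Finset.card_filter_add_card_filter_not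
      (s := Finset.univ.filter fun ed : G.edgeSet => γ' ed = e ∧ v ∈ (ed : Sym2 V))
      (p := fun ed => ∃ z ∈ zs.toFinset, z ∈ (ed : Sym2 V))]
    congr 1
    rw [Finset.filter_filter]
    apply congrArg Finset.card
    apply Finset.filter_congr
    intro ed _
    exact and_assoc
    rw [Finset.filter_filter]
  have hadjxT : ∀ z ∈ zs.toFinset, G.Adj x z := fun z hz => (hZmem z (hTZ z hz)).2.2.1
  have hadjyT : ∀ z ∈ zs.toFinset, G.Adj y z := fun z hz => (hZmem z (hTZ z hz)).2.2.2
  have hDx'' : ∀ e : C,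
      (Finset.univ.filter fun ed : G.edgeSet => γm (φ ed) = e ∧ x ∈ (ed : Sym2 V)).card
        + (if e ∈ (c₀ :: l).dropLast then 1 else 0)
      = (Finset.univ.filter fun ed : G.edgeSet => γm ed = e ∧ x ∈ (ed : Sym2 V)).card
        + (if e ∈ l then 1 else 0) := by
    intro e
    rw [htchsplit (fun ed => γm (φ ed)) e x, htchsplit γm e x]
    rw [← card_edge_nbr x zs.toFinset hxT hadjxT (fun ed => γm (φ ed) = e)
      (fun z => Fc γm cdef y z = e) ?hq1]
    rw [← card_edge_nbr x zs.toFinset hxT hadjxT (fun ed => γm ed = e)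
      (fun z => Fc γm cdef x z = e) ?hq2]
    case hq1 =>
      intro w hw
      show Fc γm cdef y w = e ↔ γm (φ ⟨s(x,w), _⟩) = e
      have hadjyw : G.Adj y w := hadjyT w hw
      have hφe : φ ⟨s(x,w), (G.mem_edgeSet).mpr (hadjxT w hw)⟩
          = ⟨s(y,w), (G.mem_edgeSet).mpr hadjyw⟩ := by
        apply Subtype.ext
        rw [hφval _ ⟨w, hw, Sym2.mem_mk_right x w⟩]
        show Sym2.map τ s(x,w) = s(y,w)
        rw [Sym2.map_pair_eq, show τ x = y from Equiv.swap_apply_left x y, hτT w hw]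
      rw [hφe, Fc_pos γm cdef hadjyw]
    case hq2 =>
      intro w hw
      show Fc γm cdef x w = e ↔ γm ⟨s(x,w), _⟩ = e
      rw [Fc_pos γm cdef (hadjxT w hw)]
    rw [hcg e, hcf e]
    have hrest : (Finset.univ.filter fun ed : G.edgeSet =>
        (γm (φ ed) = e ∧ x ∈ (ed : Sym2 V)) ∧ ¬(∃ z ∈ zs.toFinset, z ∈ (ed : Sym2 V))).card
        = (Finset.univ.filter fun ed : G.edgeSet =>
        (γm ed = e ∧ x ∈ (ed : Sym2 V)) ∧ ¬(∃ z ∈ zs.toFinset, z ∈ (ed : Sym2 V))).card := by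
      congr 1
      apply Finset.filter_congr
      intro ed _
      constructor
      · rintro ⟨⟨h1, h2⟩, h3⟩
        rw [hφval' ed h3] at h1
        exact ⟨⟨h1, h2⟩, h3⟩
      · rintro ⟨⟨h1, h2⟩, h3⟩
        rw [← hφval' ed h3] at h1
        exact ⟨⟨h1, h2⟩, h3⟩
    omega
  have hDy'' : ∀ e : C,
      (Finset.univ.filter fun ed : G.edgeSet => γm (φ ed) = e ∧ y ∈ (ed : Sym2 V)).card
        + (if e ∈ l then 1 else 0)
      = (Finset.univ.filter fun ed : G.edgeSet => γm ed = e ∧ y ∈ (ed : Sym2 V)).card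
        + (if e ∈ (c₀ :: l).dropLast then 1 else 0) := by
    intro e
    rw [htchsplit (fun ed => γm (φ ed)) e y, htchsplit γm e y]
    rw [← card_edge_nbr y zs.toFinset hyT hadjyT (fun ed => γm (φ ed) = e)
      (fun z => Fc γm cdef x z = e) ?hq1]
    rw [← card_edge_nbr y zs.toFinset hyT hadjyT (fun ed => γm ed = e)
      (fun z => Fc γm cdef y z = e) ?hq2]
    case hq1 =>
      intro w hw
      show Fc γm cdef x w = e ↔ γm (φ ⟨s(y,w), _⟩) = e
      have hadjxw : G.Adj x w := hadjxT w hw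
      have hφe : φ ⟨s(y,w), (G.mem_edgeSet).mpr (hadjyT w hw)⟩
          = ⟨s(x,w), (G.mem_edgeSet).mpr hadjxw⟩ := by
        apply Subtype.ext
        rw [hφval _ ⟨w, hw, Sym2.mem_mk_right y w⟩]
        show Sym2.map τ s(y,w) = s(x,w)
        rw [Sym2.map_pair_eq, show τ y = x from Equiv.swap_apply_right x y, hτT w hw]
      rw [hφe, Fc_pos γm cdef hadjxw]
    case hq2 =>
      intro w hw
      show Fc γm cdef y w = e ↔ γm ⟨s(y,w), _⟩ = e
      rw [Fc_pos γm cdef (hadjyT w hw)]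
    rw [hcg e, hcf e]
    have hrest : (Finset.univ.filter fun ed : G.edgeSet =>
        (γm (φ ed) = e ∧ y ∈ (ed : Sym2 V)) ∧ ¬(∃ z ∈ zs.toFinset, z ∈ (ed : Sym2 V))).card
        = (Finset.univ.filter fun ed : G.edgeSet =>
        (γm ed = e ∧ y ∈ (ed : Sym2 V)) ∧ ¬(∃ z ∈ zs.toFinset, z ∈ (ed : Sym2 V))).card := by
      congr 1
      apply Finset.filter_congr
      intro ed _
      constructor
      · rintro ⟨⟨h1, h2⟩, h3⟩
        rw [hφval' ed h3] at h1
        exact ⟨⟨h1, h2⟩, h3⟩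
      · rintro ⟨⟨h1, h2⟩, h3⟩
        rw [← hφval' ed h3] at h1
        exact ⟨⟨h1, h2⟩, h3⟩
    omega
  -- degrees at all other vertices are unchanged
  have hother_deg : ∀ (w : V), w ≠ x → w ≠ y → ∀ e : C,
      (Finset.univ.filter fun ed : G.edgeSet => γm (φ ed) = e ∧ w ∈ (ed : Sym2 V)).card
      = (Finset.univ.filter fun ed : G.edgeSet => γm ed = e ∧ w ∈ (ed : Sym2 V)).card := by
    intro w h1 h2 e
    exact card_inv_aux γm φ hφφ e _ (fun ed => hφmem w h1 h2 ed)
  -- the modified colouring is admissible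
  have hPF'' : (fun ed => γm (φ ed)) ∈
      (Finset.univ.filter fun γ' : G.edgeSet → C =>
        (∀ c : C, (Finset.univ.filter fun e : G.edgeSet => γ' e = c).card =
            (Finset.univ.filter fun e : G.edgeSet => γ e = c).card) ∧
        (∀ v ∉ S, ∀ c : C,
          (Finset.univ.filter fun e : G.edgeSet => γ' e = c ∧ v ∈ (e : Sym2 V)).card =
            (Finset.univ.filter fun e : G.edgeSet => γ e = c ∧ v ∈ (e : Sym2 V)).card) ∧
        (∀ e : G.edgeSet, (∀ v ∈ (e : Sym2 V), v ∉ S) → γ' e = γ e)) := by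
    refine Finset.mem_filter.mpr ⟨Finset.mem_univ _, ?_, ?_, ?_⟩
    · exact fun c => (card_inv_aux' γm φ hφφ c).trans (hA c)
    · intro v hv c
      exact (hother_deg v (fun h => hv (h ▸ hxS)) (fun h => hv (h ▸ hyS)) c).trans (hB v hv c)
    · intro ed hed
      show γm (φ ed) = γ ed
      rw [hφout ed (fun h => hed x h hxS) (fun h => hed y h hyS)]
      exact hC ed hed
  have hkey := hmin (fun ed => γm (φ ed)) hPF''
  have hxSt : x ∈ S.toFinset := Set.mem_toFinset.mpr hxS
  have hySt : y ∈ (S.toFinset).erase x :=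
    Finset.mem_erase.mpr ⟨fun h => hxny h.symm, Set.mem_toFinset.mpr hyS⟩
  have hsplitsum : ∀ (g : V → ℤ), ∑ v ∈ S.toFinset, g v
      = g x + (g y + ∑ v ∈ (S.toFinset.erase x).erase y, g v) := by
    intro g
    rw [← Finset.add_sum_erase _ g hxSt, ← Finset.add_sum_erase _ g hySt]
  have hlt : (∑ v ∈ S.toFinset, ∑ c : C,
        ((Finset.univ.filter fun ed : G.edgeSet => γm (φ ed) = c ∧ v ∈ (ed : Sym2 V)).card : ℤ)^2)
      < ∑ v ∈ S.toFinset, ∑ c : C,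
        ((Finset.univ.filter fun ed : G.edgeSet => γm ed = c ∧ v ∈ (ed : Sym2 V)).card : ℤ)^2 := by
    rw [hsplitsum, hsplitsum]
    have hrest : (∑ v ∈ (S.toFinset.erase x).erase y, ∑ c : C,
        ((Finset.univ.filter fun ed : G.edgeSet => γm (φ ed) = c ∧ v ∈ (ed : Sym2 V)).card : ℤ)^2)
        = ∑ v ∈ (S.toFinset.erase x).erase y, ∑ c : C,
        ((Finset.univ.filter fun ed : G.edgeSet => γm ed = c ∧ v ∈ (ed : Sym2 V)).card : ℤ)^2 := by
      apply Finset.sum_congr rfl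
      intro v hv
      have hvy : v ≠ y := (Finset.mem_erase.mp hv).1
      have hvx : v ≠ x := (Finset.mem_erase.mp (Finset.mem_of_mem_erase hv)).1
      apply Finset.sum_congr rfl
      intro c _
      rw [hother_deg v hvx hvy c]
    rw [hrest]
    have hmain : (∑ c : C,
        ((Finset.univ.filter fun ed : G.edgeSet => γm (φ ed) = c ∧ x ∈ (ed : Sym2 V)).card : ℤ)^2)
        + (∑ c : C,
        ((Finset.univ.filter fun ed : G.edgeSet => γm (φ ed) = c ∧ y ∈ (ed : Sym2 V)).card : ℤ)^2)
        < (∑ c : C,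
        ((Finset.univ.filter fun ed : G.edgeSet => γm ed = c ∧ x ∈ (ed : Sym2 V)).card : ℤ)^2)
        + (∑ c : C,
        ((Finset.univ.filter fun ed : G.edgeSet => γm ed = c ∧ y ∈ (ed : Sym2 V)).card : ℤ)^2) := by
      rw [← Finset.sum_add_distrib, ← Finset.sum_add_distrib]
      have hterm : ∀ c : C, c ≠ c₀ →
          ((Finset.univ.filter fun ed : G.edgeSet => γm (φ ed) = c ∧ x ∈ (ed : Sym2 V)).card : ℤ)^2
          + ((Finset.univ.filter fun ed : G.edgeSet => γm (φ ed) = c ∧ y ∈ (ed : Sym2 V)).card : ℤ)^2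
          ≤ ((Finset.univ.filter fun ed : G.edgeSet => γm ed = c ∧ x ∈ (ed : Sym2 V)).card : ℤ)^2
          + ((Finset.univ.filter fun ed : G.edgeSet => γm ed = c ∧ y ∈ (ed : Sym2 V)).card : ℤ)^2 := by
        intro c hc
        have e1 := hDx'' c
        have e2 := hDy'' c
        by_cases hcd : c = d
        · subst hcd
          rw [if_neg hdf, if_pos hdg] at e1 e2
          have f1 : ((Finset.univ.filter fun ed : G.edgeSet => γm (φ ed) = c ∧ x ∈ (ed : Sym2 V)).card : ℤ)
              = ((Finset.univ.filter fun ed : G.edgeSet => γm ed = c ∧ x ∈ (ed : Sym2 V)).card : ℤ) + 1 := by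
            omega
          have f2 : ((Finset.univ.filter fun ed : G.edgeSet => γm (φ ed) = c ∧ y ∈ (ed : Sym2 V)).card : ℤ)
              = ((Finset.univ.filter fun ed : G.edgeSet => γm ed = c ∧ y ∈ (ed : Sym2 V)).card : ℤ) - 1 := by
            omega
          have f3 : ((Finset.univ.filter fun ed : G.edgeSet => γm ed = c ∧ x ∈ (ed : Sym2 V)).card : ℤ) + 1
              ≤ ((Finset.univ.filter fun ed : G.edgeSet => γm ed = c ∧ y ∈ (ed : Sym2 V)).card : ℤ) := by
            have := hpq
            omega
          rw [f1, f2]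
          nlinarith [f3]
        · have hif : (if c ∈ (c₀ :: l).dropLast then (1:ℕ) else 0) = (if c ∈ l then 1 else 0) := by
            rw [if_congr (hother c hc hcd) rfl rfl]
          rw [hif] at e1
          rw [show (if c ∈ l then (1:ℕ) else 0) = (if c ∈ (c₀ :: l).dropLast then 1 else 0) from
            (if_congr (hother c hc hcd) rfl rfl).symm] at e2
          have f1 : ((Finset.univ.filter fun ed : G.edgeSet => γm (φ ed) = c ∧ x ∈ (ed : Sym2 V)).card : ℤ)
              = ((Finset.univ.filter fun ed : G.edgeSet => γm ed = c ∧ x ∈ (ed : Sym2 V)).card : ℤ) := by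
            omega
          have f2 : ((Finset.univ.filter fun ed : G.edgeSet => γm (φ ed) = c ∧ y ∈ (ed : Sym2 V)).card : ℤ)
              = ((Finset.univ.filter fun ed : G.edgeSet => γm ed = c ∧ y ∈ (ed : Sym2 V)).card : ℤ) := by
            omega
          rw [f1, f2]
      have hstrict :
          ((Finset.univ.filter fun ed : G.edgeSet => γm (φ ed) = c₀ ∧ x ∈ (ed : Sym2 V)).card : ℤ)^2
          + ((Finset.univ.filter fun ed : G.edgeSet => γm (φ ed) = c₀ ∧ y ∈ (ed : Sym2 V)).card : ℤ)^2
          < ((Finset.univ.filter fun ed : G.edgeSet => γm ed = c₀ ∧ x ∈ (ed : Sym2 V)).card : ℤ)^2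
          + ((Finset.univ.filter fun ed : G.edgeSet => γm ed = c₀ ∧ y ∈ (ed : Sym2 V)).card : ℤ)^2 := by
        have e1 := hDx'' c₀
        have e2 := hDy'' c₀
        rw [if_pos hc₀f, if_neg hc₀g] at e1 e2
        have f1 : ((Finset.univ.filter fun ed : G.edgeSet => γm (φ ed) = c₀ ∧ x ∈ (ed : Sym2 V)).card : ℤ)
            = ((Finset.univ.filter fun ed : G.edgeSet => γm ed = c₀ ∧ x ∈ (ed : Sym2 V)).card : ℤ) - 1 := by
          omega
        have f2 : ((Finset.univ.filter fun ed : G.edgeSet => γm (φ ed) = c₀ ∧ y ∈ (ed : Sym2 V)).card : ℤ)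
            = ((Finset.univ.filter fun ed : G.edgeSet => γm ed = c₀ ∧ y ∈ (ed : Sym2 V)).card : ℤ) + 1 := by
          omega
        have f3 : ((Finset.univ.filter fun ed : G.edgeSet => γm ed = c₀ ∧ y ∈ (ed : Sym2 V)).card : ℤ) + 2
            ≤ ((Finset.univ.filter fun ed : G.edgeSet => γm ed = c₀ ∧ x ∈ (ed : Sym2 V)).card : ℤ) := by
          omega
        rw [f1, f2]
        nlinarith [f3]
      apply Finset.sum_lt_sum
      · intro c _
        by_cases hc : c = c₀
        · subst hc; exact le_of_lt hstrict
        · exact hterm c hc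
      · exact ⟨c₀, Finset.mem_univ _, hstrict⟩
    linarith
  exact absurd hkey (not_le.mpr hlt)
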